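/- arXiv:1503.04016 — 4 statements merged into one kernel-verified Lean document; each statement's English description precedes it below -/
import Mathlib

section
/- For real p > 0 and real x, y, the function p ↦ B(x,y;p) is strictly decreasing. -/
open MeasureTheory

lemma bdd_aux (a c : ℝ) (hc : 0 < c) :
    ∃ M : ℝ, 0 ≤ M ∧ ∀ u ∈ Set.Ioo (0:ℝ) 1, u ^ a * Real.exp (-c / u) ≤ M := by
  have h0 : Filter.Tendsto (fun u : ℝ => u ^ a * Real.exp (-c / u))
      (nhdsWithin 0 (Set.Ioi 0)) (nhds 0) := by
    have h1 : Filter.Tendsto (fun v : ℝ => v ^ (-a) * Real.exp (-c * v))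
        Filter.atTop (nhds 0) :=
      tendsto_rpow_mul_exp_neg_mul_atTop_nhds_zero (-a) c hc
    have h2 : Filter.Tendsto (fun u : ℝ => u⁻¹) (nhdsWithin 0 (Set.Ioi 0)) Filter.atTop :=
      tendsto_inv_nhdsGT_zero
    refine (h1.comp h2).congr' ?_
    filter_upwards [self_mem_nhdsWithin] with u hu
    have hu' : (0:ℝ) < u := hu
    simp only [Function.comp]
    rw [Real.inv_rpow hu'.le, Real.rpow_neg hu'.le, inv_inv, div_eq_mul_inv, neg_mul]
  have hev : ∀ᶠ u in nhdsWithin (0:ℝ) (Set.Ioi 0),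
      u ^ a * Real.exp (-c / u) < 1 := h0.eventually_lt_const one_pos
  obtain ⟨δ, hδ, hδ'⟩ := (nhdsGT_basis (0:ℝ)).eventually_iff.mp hev
  set δ₀ : ℝ := min δ 1 with hδ₀def
  have hδ₀ : 0 < δ₀ := lt_min hδ one_pos
  have hcont : ContinuousOn (fun u : ℝ => u ^ a * Real.exp (-c / u)) (Set.Icc δ₀ 1) := by
    apply ContinuousOn.mul
    · exact ContinuousOn.rpow_const continuousOn_id fun u hu =>
        Or.inl (ne_of_gt (lt_of_lt_of_le hδ₀ hu.1))
    · exact Real.continuous_exp.comp_continuousOn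
        (ContinuousOn.div continuousOn_const continuousOn_id
          fun u hu => ne_of_gt (lt_of_lt_of_le hδ₀ hu.1))
  obtain ⟨C, hC⟩ := (isCompact_Icc).exists_bound_of_continuousOn hcont
  refine ⟨max 1 C, le_trans zero_le_one (le_max_left _ _), fun u hu => ?_⟩
  rcases lt_or_ge u δ₀ with h | h
  · exact le_trans (hδ' ⟨hu.1, lt_of_lt_of_le h (min_le_left _ _)⟩).le (le_max_left _ _)
  · refine le_trans ?_ (le_max_right _ _)
    exact le_trans (le_abs_self _) (hC u ⟨h, hu.2.le⟩)

lemma integrable_aux (x y p : ℝ) (hp : 0 < p) :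
    IntegrableOn
      (fun t : ℝ => t ^ (x - 1) * (1 - t) ^ (y - 1) * Real.exp (-p / (4 * t * (1 - t))))
      (Set.Ioo 0 1) := by
  obtain ⟨M1, hM1₀, hM1⟩ := bdd_aux (x - 1) (p / 8) (by positivity)
  obtain ⟨M2, hM2₀, hM2⟩ := bdd_aux (y - 1) (p / 8) (by positivity)
  have hcont : ContinuousOn
      (fun t : ℝ => t ^ (x - 1) * (1 - t) ^ (y - 1) * Real.exp (-p / (4 * t * (1 - t))))
      (Set.Ioo 0 1) := by
    apply ContinuousOn.mul
    · apply ContinuousOn.mul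
      · exact ContinuousOn.rpow_const continuousOn_id fun t ht => Or.inl (ne_of_gt ht.1)
      · exact ContinuousOn.rpow_const (continuousOn_const.sub continuousOn_id)
          fun t ht => Or.inl (by simp; linarith [ht.2])
    · refine Real.continuous_exp.comp_continuousOn
        (ContinuousOn.div continuousOn_const
          ((continuousOn_const.mul continuousOn_id).mul
            (continuousOn_const.sub continuousOn_id)) fun t ht => ?_)
      have h1 : 0 < t := ht.1
      have h2 : 0 < 1 - t := by linarith [ht.2]
      positivity
  refine Integrable.mono'
    (integrableOn_const measure_Ioo_lt_top.ne : IntegrableOn (fun _ => M1 * M2) _ _)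
    (hcont.aestronglyMeasurable measurableSet_Ioo) ?_
  refine (ae_restrict_iff' measurableSet_Ioo).mpr (Filter.Eventually.of_forall fun t ht => ?_)
  have h1 : (0:ℝ) < t := ht.1
  have h2 : (0:ℝ) < 1 - t := by linarith [ht.2]
  have hA : (0:ℝ) ≤ t ^ (x - 1) := Real.rpow_nonneg h1.le _
  have hB : (0:ℝ) ≤ (1 - t) ^ (y - 1) := Real.rpow_nonneg h2.le _
  have hexp : Real.exp (-p / (4 * t * (1 - t))) ≤
      Real.exp (-(p / 8) / t) * Real.exp (-(p / 8) / (1 - t)) := by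
    rw [← Real.exp_add]
    apply Real.exp_le_exp.mpr
    have heq : -(p / 8) / t + -(p / 8) / (1 - t) = -p / (8 * (t * (1 - t))) := by
      field_simp
      ring
    rw [heq, div_le_div_iff₀ (by positivity) (by positivity)]
    nlinarith [mul_pos h1 h2, hp]
  rw [Real.norm_eq_abs, abs_of_nonneg (by positivity)]
  calc t ^ (x - 1) * (1 - t) ^ (y - 1) * Real.exp (-p / (4 * t * (1 - t)))
      ≤ t ^ (x - 1) * (1 - t) ^ (y - 1) *
        (Real.exp (-(p / 8) / t) * Real.exp (-(p / 8) / (1 - t))) :=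
        mul_le_mul_of_nonneg_left hexp (mul_nonneg hA hB)
    _ = (t ^ (x - 1) * Real.exp (-(p / 8) / t)) *
        ((1 - t) ^ (y - 1) * Real.exp (-(p / 8) / (1 - t))) := by ring
    _ ≤ M1 * M2 := by
        refine mul_le_mul (hM1 t ht) (hM2 (1 - t) ⟨h2, by linarith [ht.1]⟩)
          (mul_nonneg hB (Real.exp_pos _).le) hM1₀

noncomputable def genBetaReal (x y p : ℝ) : ℝ :=
  ∫ t in Set.Ioo (0:ℝ) 1,
    t ^ (x - 1) * (1 - t) ^ (y - 1) * Real.exp (-p / (4 * t * (1 - t)))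

theorem genBeta_strictAnti (x y : ℝ) :
    StrictAntiOn (fun p => genBetaReal x y p) (Set.Ioi (0:ℝ)) := by
  intro p hp q hq hpq
  simp only [Set.mem_Ioi] at hp hq
  have hfi := integrable_aux x y p hp
  have hgi := integrable_aux x y q hq
  set f : ℝ → ℝ :=
    fun t => t ^ (x - 1) * (1 - t) ^ (y - 1) * Real.exp (-p / (4 * t * (1 - t))) with hf
  set g : ℝ → ℝ :=
    fun t => t ^ (x - 1) * (1 - t) ^ (y - 1) * Real.exp (-q / (4 * t * (1 - t))) with hg
  have hpos : ∀ t ∈ Set.Ioo (0:ℝ) 1, 0 < f t - g t := by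
    intro t ht
    have h1 : (0:ℝ) < t := ht.1
    have h2 : (0:ℝ) < 1 - t := by linarith [ht.2]
    have hs : (0:ℝ) < 4 * t * (1 - t) := by positivity
    have hE : Real.exp (-q / (4 * t * (1 - t))) < Real.exp (-p / (4 * t * (1 - t))) :=
      Real.exp_lt_exp.mpr ((div_lt_div_iff_of_pos_right hs).mpr (by linarith))
    have hAB : (0:ℝ) < t ^ (x - 1) * (1 - t) ^ (y - 1) :=
      mul_pos (Real.rpow_pos_of_pos h1 _) (Real.rpow_pos_of_pos h2 _)
    have : f t - g t = (t ^ (x - 1) * (1 - t) ^ (y - 1)) *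
        (Real.exp (-p / (4 * t * (1 - t))) - Real.exp (-q / (4 * t * (1 - t)))) := by
      simp only [hf, hg]; ring
    rw [this]
    exact mul_pos hAB (sub_pos.mpr hE)
  have key : 0 < ∫ t in Set.Ioo (0:ℝ) 1, (f t - g t) := by
    rw [setIntegral_pos_iff_support_of_nonneg_ae]
    · refine lt_of_lt_of_le ?_ (measure_mono fun t ht =>
        (⟨(hpos t ht).ne', ht⟩ : t ∈ Function.support (fun t => f t - g t) ∩ Set.Ioo 0 1))
      rw [Real.volume_Ioo]
      norm_num
    · exact (ae_restrict_iff' measurableSet_Ioo).mpr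
        (Filter.Eventually.of_forall fun t ht => (hpos t ht).le)
    · exact hfi.sub hgi
  have hsub : ∫ t in Set.Ioo (0:ℝ) 1, (f t - g t) =
      (∫ t in Set.Ioo (0:ℝ) 1, f t) - ∫ t in Set.Ioo (0:ℝ) 1, g t :=
    integral_sub hfi hgi
  have : genBetaReal x y q < genBetaReal x y p := by
    unfold genBetaReal
    rw [hsub] at key
    simp only [← hf, ← hg]
    linarith
  exact this
end

section
/- For real a > 0, the cubic equation t(1-t)² + (a/4)(1-2t) = 0 has three real roots: exactly one root t₀ in the open interval (0,1), one root t₁ > 1, and one root t₂ < 0. -/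
theorem saddle_cubic_roots (a : ℝ) (ha : 0 < a) :
    ∃ t0 t1 t2 : ℝ,
      t0 ∈ Set.Ioo (0:ℝ) 1 ∧ t0 * (1 - t0)^2 + (a/4) * (1 - 2*t0) = 0 ∧
      1 < t1 ∧ t1 * (1 - t1)^2 + (a/4) * (1 - 2*t1) = 0 ∧
      t2 < 0 ∧ t2 * (1 - t2)^2 + (a/4) * (1 - 2*t2) = 0 ∧
      ∀ t : ℝ, t * (1 - t)^2 + (a/4) * (1 - 2*t) = 0 → t = t0 ∨ t = t1 ∨ t = t2 := by
  set f : ℝ → ℝ := fun t => t * (1 - t)^2 + (a/4) * (1 - 2*t) with hf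
  have hc : Continuous f := by fun_prop
  have hf0 : f 0 = a/4 := by simp [hf]
  have hf1 : f 1 = -(a/4) := by simp [hf]; ring
  -- root in (0,1)
  have h01 : ∃ t0 ∈ Set.Ioo (0:ℝ) 1, f t0 = 0 := by
    have := intermediate_value_Ioo' (le_of_lt zero_lt_one) hc.continuousOn
      (a := (0:ℝ)) (b := 1)
    have h0 : (0:ℝ) ∈ Set.Ioo (f 1) (f 0) := by
      rw [hf0, hf1]; constructor <;> linarith
    obtain ⟨t0, ht0, ht0'⟩ := this h0
    exact ⟨t0, ht0, ht0'⟩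
  -- root > 1
  have hfb : 0 < f (2 + a) := by
    simp only [hf]; nlinarith [sq_nonneg a, pow_pos ha 3]
  have h1b : ∃ t1 ∈ Set.Ioo (1:ℝ) (2 + a), f t1 = 0 := by
    have := intermediate_value_Ioo (by linarith : (1:ℝ) ≤ 2 + a) hc.continuousOn
    have h0 : (0:ℝ) ∈ Set.Ioo (f 1) (f (2 + a)) := by
      rw [hf1]; exact ⟨by linarith, hfb⟩
    obtain ⟨t1, ht1, ht1'⟩ := this h0
    exact ⟨t1, ht1, ht1'⟩
  -- root < 0
  have hfc : f (-(1 + a)) < 0 := by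
    simp only [hf]; nlinarith [sq_nonneg a, pow_pos ha 3]
  have h2b : ∃ t2 ∈ Set.Ioo (-(1 + a)) (0:ℝ), f t2 = 0 := by
    have := intermediate_value_Ioo (by linarith : -(1 + a) ≤ (0:ℝ)) hc.continuousOn
    have h0 : (0:ℝ) ∈ Set.Ioo (f (-(1 + a))) (f 0) := by
      rw [hf0]; exact ⟨hfc, by linarith⟩
    obtain ⟨t2, ht2, ht2'⟩ := this h0
    exact ⟨t2, ht2, ht2'⟩
  obtain ⟨t0, ht0, hr0⟩ := h01
  obtain ⟨t1, ht1, hr1⟩ := h1b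
  obtain ⟨t2, ht2, hr2⟩ := h2b
  refine ⟨t0, t1, t2, ht0, hr0, ht1.1, hr1, ht2.2, hr2, ?_⟩
  intro t ht
  -- f t = 0, factor out (t - t0)
  have key : (t - t0) * (t^2 + t*t0 + t0^2 - 2*t - 2*t0 + 1 - a/2) = 0 := by
    have : f t - f t0 = (t - t0) * (t^2 + t*t0 + t0^2 - 2*t - 2*t0 + 1 - a/2) := by
      simp only [hf]; ring
    have hft : f t = 0 := ht
    rw [hft, hr0] at this; linarith [this]
  rcases mul_eq_zero.mp key with h | h
  · left; linarith
  · -- g t = 0 where g is the quadratic; t1 and t2 also satisfy g = 0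
    have g1 : t1^2 + t1*t0 + t0^2 - 2*t1 - 2*t0 + 1 - a/2 = 0 := by
      have key1 : (t1 - t0) * (t1^2 + t1*t0 + t0^2 - 2*t1 - 2*t0 + 1 - a/2) = 0 := by
        have : f t1 - f t0 = (t1 - t0) * (t1^2 + t1*t0 + t0^2 - 2*t1 - 2*t0 + 1 - a/2) := by
          simp only [hf]; ring
        rw [hr1, hr0] at this; linarith [this]
      rcases mul_eq_zero.mp key1 with h' | h'
      · exfalso; have := ht0.2; have := ht1.1; linarith
      · exact h'
    have g2 : t2^2 + t2*t0 + t0^2 - 2*t2 - 2*t0 + 1 - a/2 = 0 := by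
      have key2 : (t2 - t0) * (t2^2 + t2*t0 + t0^2 - 2*t2 - 2*t0 + 1 - a/2) = 0 := by
        have : f t2 - f t0 = (t2 - t0) * (t2^2 + t2*t0 + t0^2 - 2*t2 - 2*t0 + 1 - a/2) := by
          simp only [hf]; ring
        rw [hr2, hr0] at this; linarith [this]
      rcases mul_eq_zero.mp key2 with h' | h'
      · exfalso; have := ht0.1; have := ht2.2; linarith
      · exact h'
    -- quadratic g has roots t, t1, t2; at most two roots
    have key3 : (t - t1) * (t + t1 + t0 - 2) = 0 := by linear_combination h - g1
    have key4 : (t2 - t1) * (t2 + t1 + t0 - 2) = 0 := by linear_combination g2 - g1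
    have ht2eq : t2 = 2 - t1 - t0 := by
      rcases mul_eq_zero.mp key4 with h' | h'
      · exfalso; have := ht1.1; have := ht2.2; linarith
      · linarith
    rcases mul_eq_zero.mp key3 with h' | h'
    · right; left; linarith
    · right; right; linarith [ht2eq]
end

section
/- For real a > 0 and b > 0, the cubic equation t(1-t)(1-(b+1)t) + (a/4)(1-2t) = 0 has three real roots: one in the closed interval [0,1], one greater than 1, and one negative. -/
theorem saddle_cubic_roots_ab (a b : ℝ) (ha : 0 < a) (hb : 0 < b) :
    ∃ t0 t1 t2 : ℝ,
      t0 ∈ Set.Icc (0:ℝ) 1 ∧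
        t0 * (1 - t0) * (1 - (b+1)*t0) + (a/4) * (1 - 2*t0) = 0 ∧
      1 < t1 ∧ t1 * (1 - t1) * (1 - (b+1)*t1) + (a/4) * (1 - 2*t1) = 0 ∧
      t2 < 0 ∧ t2 * (1 - t2) * (1 - (b+1)*t2) + (a/4) * (1 - 2*t2) = 0 ∧
      ∀ t : ℝ, t * (1 - t) * (1 - (b+1)*t) + (a/4) * (1 - 2*t) = 0 →
        t = t0 ∨ t = t1 ∨ t = t2 := by
  set f : ℝ → ℝ := fun t => t * (1 - t) * (1 - (b+1)*t) + (a/4) * (1 - 2*t) with hf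
  have hcont : Continuous f := by fun_prop
  have hf0 : f 0 = a/4 := by norm_num [hf]
  have hf1 : f 1 = -(a/4) := by norm_num [hf]
  have hf0pos : 0 < f 0 := by rw [hf0]; linarith
  have hf1neg : f 1 < 0 := by rw [hf1]; linarith
  have hfu : 0 < f (2 + a) := by
    simp only [hf]; nlinarith [sq_nonneg a, sq_nonneg (1+a), mul_pos ha hb, mul_pos (mul_pos ha ha) hb]
  have hfv : f (-(1 + a)) < 0 := by
    simp only [hf]; nlinarith [sq_nonneg a, sq_nonneg (1+a), mul_pos ha hb, mul_pos (mul_pos ha ha) hb]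
  -- root in [0,1]
  obtain ⟨t0, ht0mem, ht0⟩ : ∃ t0 ∈ Set.Icc (0:ℝ) 1, f t0 = 0 := by
    have := intermediate_value_Icc' (by norm_num : (0:ℝ) ≤ 1) hcont.continuousOn
    have h0 : (0:ℝ) ∈ Set.Icc (f 1) (f 0) := ⟨le_of_lt hf1neg, le_of_lt hf0pos⟩
    obtain ⟨t0, ht0mem, ht0⟩ := this h0
    exact ⟨t0, ht0mem, ht0⟩
  -- root > 1
  obtain ⟨t1, ht1mem, ht1⟩ : ∃ t1 ∈ Set.Icc (1:ℝ) (2 + a), f t1 = 0 := by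
    have := intermediate_value_Icc (by linarith : (1:ℝ) ≤ 2 + a) hcont.continuousOn
    have h0 : (0:ℝ) ∈ Set.Icc (f 1) (f (2 + a)) := ⟨le_of_lt hf1neg, le_of_lt hfu⟩
    obtain ⟨t1, ht1mem, ht1⟩ := this h0
    exact ⟨t1, ht1mem, ht1⟩
  have ht1gt : 1 < t1 := by
    rcases lt_or_eq_of_le ht1mem.1 with h | h
    · exact h
    · exfalso; rw [← h] at ht1; rw [ht1] at hf1neg; linarith
  -- root < 0
  obtain ⟨t2, ht2mem, ht2⟩ : ∃ t2 ∈ Set.Icc (-(1 + a)) (0:ℝ), f t2 = 0 := by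
    have := intermediate_value_Icc (by linarith : -(1 + a) ≤ (0:ℝ)) hcont.continuousOn
    have h0 : (0:ℝ) ∈ Set.Icc (f (-(1 + a))) (f 0) := ⟨le_of_lt hfv, le_of_lt hf0pos⟩
    obtain ⟨t2, ht2mem, ht2⟩ := this h0
    exact ⟨t2, ht2mem, ht2⟩
  have ht2lt : t2 < 0 := by
    rcases lt_or_eq_of_le ht2mem.2 with h | h
    · exact h
    · exfalso; rw [h] at ht2; rw [ht2] at hf0pos; linarith
  refine ⟨t0, t1, t2, ht0mem, ht0, ht1gt, ht1, ht2lt, ht2, ?_⟩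
  intro t ht
  by_contra hcon
  push_neg at hcon
  obtain ⟨hne0, hne1, hne2⟩ := hcon
  -- quadratic factor after dividing out (x - t0)
  set q : ℝ → ℝ := fun x =>
    (b+1)*(x^2 + x*t0 + t0^2) - (b+2)*(x+t0) + (1 - a/2) with hq
  have hfac : ∀ x : ℝ, f x = 0 → (x - t0) * q x = 0 := by
    intro x hx
    simp only [hf] at hx ht0
    simp only [hq]
    linear_combination hx - ht0
  have hq1 : q t1 = 0 := by
    have := hfac t1 ht1
    rcases mul_eq_zero.mp this with h | h
    · exfalso; have : t1 = t0 := by linarith [sub_eq_zero.mp h]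
      have : (1:ℝ) < t0 := this ▸ ht1gt
      linarith [ht0mem.2]
    · exact h
  have hq2 : q t2 = 0 := by
    have := hfac t2 ht2
    rcases mul_eq_zero.mp this with h | h
    · exfalso; have : t2 = t0 := sub_eq_zero.mp h
      have : (0:ℝ) ≤ t2 := this ▸ ht0mem.1
      linarith
    · exact h
  have hqt : q t = 0 := by
    have := hfac t ht
    rcases mul_eq_zero.mp this with h | h
    · exact absurd (sub_eq_zero.mp h) hne0
    · exact h
  have ht12 : t1 ≠ t2 := by intro h; rw [h] at ht1gt; linarith
  have e1 : (b+1)*(t1 + t2 + t0) - (b+2) = 0 := by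
    have h : (t1 - t2) * ((b+1)*(t1 + t2 + t0) - (b+2)) = 0 := by
      simp only [hq] at hq1 hq2; linear_combination hq1 - hq2
    rcases mul_eq_zero.mp h with h' | h'
    · exact absurd (sub_eq_zero.mp h') ht12
    · exact h'
  have e2 : (b+1)*(t + t2 + t0) - (b+2) = 0 := by
    have h : (t - t2) * ((b+1)*(t + t2 + t0) - (b+2)) = 0 := by
      simp only [hq] at hqt hq2; linear_combination hqt - hq2
    rcases mul_eq_zero.mp h with h' | h'
    · exact absurd (sub_eq_zero.mp h') hne2
    · exact h'
  have : (b+1) * (t1 - t) = 0 := by linear_combination e1 - e2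
  rcases mul_eq_zero.mp this with h | h
  · linarith
  · exact hne1 (sub_eq_zero.mp h).symm
end

section
/- For the saddle point t₀ of ψ(t) = α/(t(1-t)) - log(1-t) at θ = 0: as α → 0⁺, the root t₀ of t²(t-1) + α(1-2t) = 0 in (0,1) satisfies t₀ = α^{1/2} - α/2 + O(α^{3/2}). -/
open Filter Asymptotics

open Classical in
noncomputable def saddleT0 (α : ℝ) : ℝ :=
  if h : ∃ t, t ∈ Set.Icc (Real.sqrt α - α/2 - α ^ (3/2 : ℝ))
      (Real.sqrt α - α/2 + α ^ (3/2 : ℝ)) ∧ t^2 * (t - 1) + α * (1 - 2 * t) = 0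
  then h.choose else 0

lemma rpow_three_half (α : ℝ) (hα : 0 ≤ α) : α ^ (3/2 : ℝ) = (Real.sqrt α)^3 := by
  rw [Real.sqrt_eq_rpow, ← Real.rpow_natCast (α ^ (1/2 : ℝ)) 3, ← Real.rpow_mul hα]
  norm_num

lemma saddle_exists (α : ℝ) (h1 : 0 < α) (h2 : α < 1/100) :
    ∃ t, t ∈ Set.Icc (Real.sqrt α - α/2 - α ^ (3/2 : ℝ))
      (Real.sqrt α - α/2 + α ^ (3/2 : ℝ)) ∧ t^2 * (t - 1) + α * (1 - 2 * t) = 0 := by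
  set s := Real.sqrt α with hs
  have hs0 : 0 < s := Real.sqrt_pos.mpr h1
  have hs1 : s < 1/10 := by
    rw [hs, show (1/10 : ℝ) = Real.sqrt (1/100) by
      rw [show (1/100 : ℝ) = (1/10)^2 by norm_num, Real.sqrt_sq (by norm_num)]]
    exact Real.sqrt_lt_sqrt h1.le h2
  have hα : α = s^2 := (Real.sq_sqrt h1.le).symm
  have h32 : α ^ (3/2 : ℝ) = s^3 := rpow_three_half α h1.le
  set a := s - α/2 - α ^ (3/2 : ℝ) with ha
  set b := s - α/2 + α ^ (3/2 : ℝ) with hb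
  have h32pos : (0:ℝ) < α ^ (3/2 : ℝ) := Real.rpow_pos_of_pos h1 _
  have hab : a ≤ b := by rw [ha, hb]; linarith
  have hfa : 0 < a^2 * (a - 1) + α * (1 - 2 * a) := by
    have key : a^2 * (a - 1) + α * (1 - 2 * a)
        = s^4 * (5/4 - 5/4*s + 15/8*s^2 + 9/4*s^3 - 3/2*s^4 - s^5) := by
      rw [ha, h32, hα]; ring
    rw [key]
    have h4 : 0 < s^4 := by positivity
    have hg : 0 < 5/4 - 5/4*s + 15/8*s^2 + 9/4*s^3 - 3/2*s^4 - s^5 := by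
      nlinarith [pow_pos hs0 2, pow_pos hs0 3, pow_pos hs0 4, pow_pos hs0 5,
        sq_nonneg s, mul_pos hs0 hs0]
    positivity
  have hfb : b^2 * (b - 1) + α * (1 - 2 * b) < 0 := by
    have key : b^2 * (b - 1) + α * (1 - 2 * b)
        = s^4 * (-11/4 + 11/4*s - 33/8*s^2 + 15/4*s^3 - 3/2*s^4 + s^5) := by
      rw [hb, h32, hα]; ring
    rw [key]
    have h4 : 0 < s^4 := by positivity
    have hg : -11/4 + 11/4*s - 33/8*s^2 + 15/4*s^3 - 3/2*s^4 + s^5 < 0 := by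
      nlinarith [pow_pos hs0 2, pow_pos hs0 3, pow_pos hs0 4, pow_pos hs0 5]
    nlinarith
  -- intermediate value theorem
  have hcont : ContinuousOn (fun t => t^2 * (t - 1) + α * (1 - 2 * t)) (Set.Icc a b) := by
    fun_prop
  have := intermediate_value_Icc' hab hcont
  have h0 : (0:ℝ) ∈ Set.Icc (b^2 * (b - 1) + α * (1 - 2 * b)) (a^2 * (a - 1) + α * (1 - 2 * a)) :=
    ⟨hfb.le, hfa.le⟩
  obtain ⟨t, ht, hteq⟩ := this h0
  exact ⟨t, ht, hteq⟩

theorem saddle_t0_asymptotics :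
    ∃ t0 : ℝ → ℝ,
      (∀ᶠ α in nhdsWithin 0 (Set.Ioi (0:ℝ)),
        t0 α ∈ Set.Ioo (0:ℝ) 1 ∧
          (t0 α)^2 * (t0 α - 1) + α * (1 - 2 * t0 α) = 0) ∧
      (fun α => t0 α - (Real.sqrt α - α/2)) =O[nhdsWithin 0 (Set.Ioi (0:ℝ))]
        fun α => α ^ (3/2 : ℝ) := by
  refine ⟨saddleT0, ?_, ?_⟩
  · have hmem : Set.Ioo (0:ℝ) (1/100) ∈ nhdsWithin 0 (Set.Ioi (0:ℝ)) :=
      Ioo_mem_nhdsGT_of_mem ⟨le_refl 0, by norm_num⟩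
    filter_upwards [hmem] with α hα
    obtain ⟨h1, h2⟩ := hα
    have hex := saddle_exists α h1 h2
    have hspec := hex.choose_spec
    have hval : saddleT0 α = hex.choose := by unfold saddleT0; rw [dif_pos hex]
    obtain ⟨⟨hlo, hhi⟩, heq⟩ := hspec
    set s := Real.sqrt α with hs
    have hs0 : 0 < s := Real.sqrt_pos.mpr h1
    have hs1 : s < 1/10 := by
      rw [hs, show (1/10 : ℝ) = Real.sqrt (1/100) by
        rw [show (1/100 : ℝ) = (1/10)^2 by norm_num, Real.sqrt_sq (by norm_num)]]
      exact Real.sqrt_lt_sqrt h1.le h2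
    have hαs : α = s^2 := (Real.sq_sqrt h1.le).symm
    have h32 : α ^ (3/2 : ℝ) = s^3 := rpow_three_half α h1.le
    have hapos : 0 < s - α/2 - α ^ (3/2 : ℝ) := by
      rw [h32, hαs]; nlinarith [pow_pos hs0 3]
    have hblt : s - α/2 + α ^ (3/2 : ℝ) < 1 := by
      rw [h32, hαs]; nlinarith [pow_pos hs0 3, pow_pos hs0 2]
    rw [hval]
    exact ⟨⟨lt_of_lt_of_le hapos hlo, lt_of_le_of_lt hhi hblt⟩, heq⟩
  · rw [Asymptotics.isBigO_iff]
    refine ⟨1, ?_⟩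
    have hmem : Set.Ioo (0:ℝ) (1/100) ∈ nhdsWithin 0 (Set.Ioi (0:ℝ)) :=
      Ioo_mem_nhdsGT_of_mem ⟨le_refl 0, by norm_num⟩
    filter_upwards [hmem] with α hα
    obtain ⟨h1, h2⟩ := hα
    have hex := saddle_exists α h1 h2
    have hspec := hex.choose_spec
    have hval : saddleT0 α = hex.choose := by unfold saddleT0; rw [dif_pos hex]
    obtain ⟨⟨hlo, hhi⟩, _⟩ := hspec
    have h32pos : 0 < α ^ (3/2 : ℝ) := Real.rpow_pos_of_pos h1 _
    rw [hval, one_mul, Real.norm_eq_abs, Real.norm_eq_abs, abs_of_pos h32pos, abs_le]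
    constructor <;> linarith
end
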